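/- Let H be a finite simple bipartite graph with parts V and F in which every vertex of F has at least one neighbour in V, and let G be the graph with vertex set V in which two distinct vertices u and v are adjacent if and only if they have a common neighbour in F (that is, G = H²[V]). Then c(G) ≤ c(H). -/

import Mathlib

open SimpleGraph Set

namespace CopsRobbers

variable {V : Type}

/-- One step of a player in the game: stay put or move to an adjacent vertex. -/
def Step (G : SimpleGraph V) (a b : V) : Prop := a = b ∨ G.Adj a b

/-- `u` is within graph distance `d` of `v` in `G`. -/
def WithinDist (G : SimpleGraph V) (d : ℕ) (u v : V) : Prop :=
  ∃ w : G.Walk u v, w.length ≤ d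

/-- `p` cops have a strategy on `G` that guarantees capturing the robber at distance `d`
within finitely many rounds.  A cop strategy is a function `F` from the history of robber
positions to the positions of the `p` cops (`F []` gives the initial placement, chosen
before the robber places himself); the robber is modelled by an arbitrary trajectory
`r : ℕ → V` of vertices, each step staying put or moving along an edge.  Capture happens
if after some robber move, or after the cops' reply to it, some cop is within distance
`d` of the robber. -/
def CopsWin (G : SimpleGraph V) (d p : ℕ) : Prop :=
  ∃ F : List V → Fin p → V,
    (∀ (hist : List V) (x : V) (i : Fin p), Step G (F hist i) (F (hist ++ [x]) i)) ∧
    ∀ r : ℕ → V, (∀ n, Step G (r n) (r (n + 1))) →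
      ∃ (n : ℕ) (i : Fin p),
        WithinDist G d (F (List.ofFn fun m : Fin n => r m.val) i) (r n) ∨
        WithinDist G d (F (List.ofFn fun m : Fin (n + 1) => r m.val) i) (r n)

/-- The distance-`d` cop number of `G`: the least number of cops that can guarantee
capture at distance `d`. -/
noncomputable def copNumber (G : SimpleGraph V) (d : ℕ) : ℕ :=
  sInf { p | CopsWin G d p }

end CopsRobbers
namespace CopsRobbers

/-- A drawing of a finite simple graph in the plane: vertices go to distinct points, every
edge `uv` is drawn as a simple arc `arc u v` (parametrised on `[0,1]`, with
`arc v u` the reverse parametrisation) joining the endpoints, avoiding all vertex points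
in its interior, any two arcs meet in finitely many points, and no non-vertex point lies
on three or more arcs. -/
structure PlaneDrawing {V : Type} (G : SimpleGraph V) where
  vpos : V → ℝ × ℝ
  arc : V → V → ℝ → ℝ × ℝ
  vpos_inj : Function.Injective vpos
  arc_symm : ∀ u v, G.Adj u v → ∀ t : ℝ, arc u v t = arc v u (1 - t)
  arc_cont : ∀ u v, G.Adj u v → ContinuousOn (arc u v) (Set.Icc (0:ℝ) 1)
  arc_start : ∀ u v, G.Adj u v → arc u v 0 = vpos u
  arc_end : ∀ u v, G.Adj u v → arc u v 1 = vpos v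
  arc_injOn : ∀ u v, G.Adj u v → Set.InjOn (arc u v) (Set.Icc (0:ℝ) 1)
  arc_avoid : ∀ u v, G.Adj u v → ∀ t ∈ Set.Ioo (0:ℝ) 1, ∀ w, arc u v t ≠ vpos w
  finite_inter : ∀ u v w x, G.Adj u v → G.Adj w x → s(u, v) ≠ s(w, x) →
    (arc u v '' Set.Icc (0:ℝ) 1 ∩ arc w x '' Set.Icc (0:ℝ) 1).Finite
  no_triple : ∀ pt : ℝ × ℝ, pt ∉ Set.range vpos →
    ∀ u₁ v₁ u₂ v₂ u₃ v₃, G.Adj u₁ v₁ → G.Adj u₂ v₂ → G.Adj u₃ v₃ →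
      s(u₁, v₁) ≠ s(u₂, v₂) → s(u₁, v₁) ≠ s(u₃, v₃) → s(u₂, v₂) ≠ s(u₃, v₃) →
      ¬(pt ∈ arc u₁ v₁ '' Set.Icc (0:ℝ) 1 ∧ pt ∈ arc u₂ v₂ '' Set.Icc (0:ℝ) 1 ∧
        pt ∈ arc u₃ v₃ '' Set.Icc (0:ℝ) 1)

namespace PlaneDrawing

variable {V : Type} {G : SimpleGraph V}

/-- The edges `uv` and `wx` cross in the drawing: they are distinct edges sharing a point
interior to both arcs. -/
def Crosses (D : PlaneDrawing G) (u v w x : V) : Prop :=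
  G.Adj u v ∧ G.Adj w x ∧ s(u, v) ≠ s(w, x) ∧
    ∃ pt : ℝ × ℝ, pt ∈ D.arc u v '' Set.Ioo (0:ℝ) 1 ∧ pt ∈ D.arc w x '' Set.Ioo (0:ℝ) 1

/-- `e` is an uncrossed edge of the drawing. -/
def UncrossedE (D : PlaneDrawing G) (e : Sym2 V) : Prop :=
  ∀ a b w x, s(a, b) = e → ¬D.Crosses a b w x

/-- The set of crossing points lying on the edge `uv`. -/
def crossingPointsOn (D : PlaneDrawing G) (u v : V) : Set (ℝ × ℝ) :=
  { pt | pt ∈ D.arc u v '' Set.Ioo (0:ℝ) 1 ∧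
      ∃ w x, D.Crosses u v w x ∧ pt ∈ D.arc w x '' Set.Ioo (0:ℝ) 1 }

/-- `pt` is a crossing point of the drawing. -/
def IsCrossingPoint (D : PlaneDrawing G) (pt : ℝ × ℝ) : Prop :=
  ∃ u v w x, D.Crosses u v w x ∧ pt ∈ D.arc u v '' Set.Ioo (0:ℝ) 1 ∧
    pt ∈ D.arc w x '' Set.Ioo (0:ℝ) 1

/-- The drawing is `k`-plane: every edge is crossed at most `k` times. -/
def KPlane (D : PlaneDrawing G) (k : ℕ) : Prop :=
  ∀ u v, G.Adj u v → (D.crossingPointsOn u v).Finite ∧ (D.crossingPointsOn u v).ncard ≤ k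

/-- The drawing is 1-plane: every edge is crossed at most once, and (as usual) no two
edges sharing an endpoint cross, so every crossing has four distinct endpoints. -/
def OnePlane (D : PlaneDrawing G) : Prop :=
  D.KPlane 1 ∧ ∀ u v w x, D.Crosses u v w x → u ≠ w ∧ u ≠ x ∧ v ≠ w ∧ v ≠ x

/-- The parameter `X(G)` of the drawing: the least `n` such that for every crossing,
every pair of consecutive endpoints is joined by a path of length at most `n`. -/
noncomputable def Xparam (D : PlaneDrawing G) : ℕ :=
  sInf { n | ∀ u v w x, D.Crosses u v w x → ∀ a b : V, (a = u ∨ a = v) → (b = w ∨ b = x) →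
    ∃ p : G.Walk a b, p.length ≤ n }

/-- The parameter `x(G)` of the drawing: the least `n` such that for every crossing,
some pair of consecutive endpoints is joined by a path of length at most `n`. -/
noncomputable def xparam (D : PlaneDrawing G) : ℕ :=
  sInf { n | ∀ u v w x, D.Crosses u v w x → ∃ a b : V, (a = u ∨ a = v) ∧ (b = w ∨ b = x) ∧
    ∃ p : G.Walk a b, p.length ≤ n }

/-- The subset of the plane covered by the drawing. -/
def image (D : PlaneDrawing G) : Set (ℝ × ℝ) :=
  Set.range D.vpos ∪ ⋃ (u : V) (v : V) (_ : G.Adj u v), D.arc u v '' Set.Icc (0:ℝ) 1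

/-- Faces of the drawing: connected components of the complement. -/
def IsFace (D : PlaneDrawing G) (F : Set (ℝ × ℝ)) : Prop :=
  ∃ z ∉ D.image, F = connectedComponentIn D.imageᶜ z

/-- The subset of the plane covered by the arc of the (unordered) edge `e`. -/
def edgeArcSet (D : PlaneDrawing G) (e : Sym2 V) : Set (ℝ × ℝ) :=
  ⋃ (a : V) (b : V) (_ : G.Adj a b) (_ : s(a, b) = e), D.arc a b '' Set.Icc (0:ℝ) 1

/-- The skeleton of the drawing: the subgraph consisting of all uncrossed edges. -/
def skeleton (D : PlaneDrawing G) : SimpleGraph V where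
  Adj u v := G.Adj u v ∧ D.UncrossedE s(u, v)
  symm := by
    constructor
    intro u v h
    refine ⟨h.1.symm, ?_⟩
    rw [Sym2.eq_swap]
    exact h.2
  loopless := ⟨fun v h => G.irrefl h.1⟩

/-- The subset of the plane covered by the drawing of the skeleton. -/
def skelImage (D : PlaneDrawing G) : Set (ℝ × ℝ) :=
  ⋃ (u : V) (v : V) (_ : G.Adj u v) (_ : D.UncrossedE s(u, v)), D.arc u v '' Set.Icc (0:ℝ) 1

/-- Faces of the skeleton: connected components of the complement of its drawing. -/
def IsSkelFace (D : PlaneDrawing G) (F : Set (ℝ × ℝ)) : Prop :=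
  ∃ z ∉ D.skelImage, F = connectedComponentIn D.skelImageᶜ z

/-- `κ` is a kite path for the crossing of `uv` and `wx` joining the consecutive
endpoints `u` and `w`: a shortest `(u,w)`-path all of whose edges are uncrossed and whose
internal vertices have degree `2`, such that the part of the arc of `uv` from `u` to the
crossing point, the arcs of `κ`, and the part of the arc of `wx` from the crossing point
to `w` together bound a face of the drawing. -/
def IsKitePath (D : PlaneDrawing G) (u v w x : V) (κ : G.Walk u w) : Prop :=
  D.Crosses u v w x ∧ κ.IsPath ∧ (∀ q : G.Walk u w, κ.length ≤ q.length) ∧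
  (∀ e ∈ κ.edges, D.UncrossedE e) ∧
  (∀ y ∈ κ.support, y ≠ u → y ≠ w → (G.neighborSet y).ncard = 2) ∧
  ∃ t s' : ℝ, t ∈ Set.Ioo (0:ℝ) 1 ∧ s' ∈ Set.Ioo (0:ℝ) 1 ∧ D.arc u v t = D.arc w x s' ∧
    ∃ F, D.IsFace F ∧
      frontier F = (D.arc u v '' Set.Icc 0 t) ∪ (⋃ e ∈ κ.edges, D.edgeArcSet e) ∪
        (D.arc w x '' Set.Icc 0 s')

/-- The drawing is kite-augmented: for every crossing and every pair of consecutive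
endpoints there is a kite path joining them. -/
def KiteAugmented (D : PlaneDrawing G) : Prop :=
  ∀ u v w x, D.Crosses u v w x → ∃ κ : G.Walk u w, D.IsKitePath u v w x κ

/-- The face-distance between any two distinct crossing points of the drawing is at
least `f`: every chain of faces `Fc 0, …, Fc (j-1)` linked by vertex or crossing points
`pts 0 = c₁, pts 1, …, pts j = c₂` on the boundaries of consecutive faces (i.e. every
path in the radial graph between the two crossing points) uses at least `f` faces. -/
def FaceDistGe (D : PlaneDrawing G) (f : ℕ) : Prop :=
  ∀ c₁ c₂ : ℝ × ℝ, D.IsCrossingPoint c₁ → D.IsCrossingPoint c₂ → c₁ ≠ c₂ →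
    ∀ (j : ℕ) (Fc : Fin j → Set (ℝ × ℝ)) (pts : Fin (j + 1) → ℝ × ℝ),
      (∀ i, D.IsFace (Fc i)) →
      (∀ i, pts i ∈ Set.range D.vpos ∨ D.IsCrossingPoint (pts i)) →
      pts 0 = c₁ → pts (Fin.last j) = c₂ →
      (∀ i : Fin j, pts i.castSucc ∈ frontier (Fc i) ∧ pts i.succ ∈ frontier (Fc i)) →
      f ≤ j

end PlaneDrawing

end CopsRobbers
namespace CopsRobbers

/-- `H` is (a copy of) the `k`-subdivision `G^(k)` of `G`: `φ` embeds the vertices of `G`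
into those of `H`, and for every ordered adjacent pair `u v` of `G`, the vertices
`p u v 0, p u v 1, …, p u v k` form the path of length `k` of `H` replacing the
edge `uv` (traversed in the opposite direction for `p v u`); the interior vertices
of these paths are fresh and pairwise disjoint for distinct edges, the edges of `H` are
exactly the edges of these paths, and every vertex of `H` arises from `G` or from a
path. -/
structure IsKSubdivision {V W : Type} (G : SimpleGraph V) (k : ℕ) (H : SimpleGraph W)
    (φ : V → W) (p : V → V → ℕ → W) : Prop where
  phi_inj : Function.Injective φ
  start : ∀ u v, G.Adj u v → p u v 0 = φ u
  finish : ∀ u v, G.Adj u v → p u v k = φ v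
  rev : ∀ u v, G.Adj u v → ∀ i ≤ k, p u v i = p v u (k - i)
  inj : ∀ u v, G.Adj u v → ∀ i ≤ k, ∀ j ≤ k, p u v i = p u v j → i = j
  internal : ∀ u v, G.Adj u v → ∀ i, 0 < i → i < k → p u v i ∉ Set.range φ
  disjoint : ∀ u v u' v', G.Adj u v → G.Adj u' v' → s(u, v) ≠ s(u', v') →
    ∀ i j, 0 < i → i < k → 0 < j → j < k → p u v i ≠ p u' v' j
  adj_iff : ∀ a b : W, H.Adj a b ↔ ∃ u v, ∃ _ : G.Adj u v, ∃ i < k,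
    (a = p u v i ∧ b = p u v (i + 1)) ∨ (b = p u v i ∧ a = p u v (i + 1))
  cover : ∀ w : W, (∃ v, w = φ v) ∨ ∃ u v, ∃ _ : G.Adj u v, ∃ i ≤ k, w = p u v i

/-- `H` together with its drawing `DH` is the subdivision `G^(k)` of the drawn graph
`(G, D)`, drawn by placing the subdivision vertices of each edge on its arc, so that the
crossings of `G^(k)` are exactly the crossings of `G`, occurring between subdivision
edges. -/
structure IsDrawnSubdivision {V W : Type} (G : SimpleGraph V) (D : PlaneDrawing G)
    (k : ℕ) (H : SimpleGraph W) (DH : PlaneDrawing H) (φ : V → W)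
    (p : V → V → ℕ → W) : Prop where
  sub : IsKSubdivision G k H φ p
  vpos_eq : ∀ v, DH.vpos (φ v) = D.vpos v
  on_arc : ∀ u v, G.Adj u v → ∀ i ≤ k, DH.vpos (p u v i) ∈ D.arc u v '' Set.Icc (0:ℝ) 1
  arcs_cover : ∀ u v, G.Adj u v →
    (⋃ i ∈ Finset.range k, DH.edgeArcSet s(p u v i, p u v (i + 1))) =
      D.arc u v '' Set.Icc (0:ℝ) 1
  cross_of : ∀ a b c e, DH.Crosses a b c e →
    ∃ u v w x, D.Crosses u v w x ∧ ∃ i < k, ∃ j < k,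
      s(a, b) = s(p u v i, p u v (i + 1)) ∧ s(c, e) = s(p w x j, p w x (j + 1))
  of_cross : ∀ u v w x, D.Crosses u v w x → ∃ i < k, ∃ j < k,
      DH.Crosses (p u v i) (p u v (i + 1)) (p w x j) (p w x (j + 1))

/-- `(H, DH)` is a 1-planarisation of the drawn graph `(G, D)`: a drawn subdivision
`G^(k)` of `G` whose drawing is 1-plane. -/
structure IsOnePlanarisation {V W : Type} (G : SimpleGraph V) (D : PlaneDrawing G)
    (k : ℕ) (H : SimpleGraph W) (DH : PlaneDrawing H) (φ : V → W)
    (p : V → V → ℕ → W) : Prop where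
  drawn : IsDrawnSubdivision G D k H DH φ p
  oneplane : DH.OnePlane

/-- `(K, DK)` is the kite-augmentation of the 1-plane drawn graph `(H, DH)` via the
embedding `ψ`: the drawing of `H` is kept unchanged, and for every crossing and every
pair of consecutive endpoints a new path with fresh internal vertices, of length equal to
the distance of the two endpoints in `H`, is added and drawn so that the resulting
drawing is a kite-augmented 1-plane drawing with the same crossings. -/
structure IsKiteAugmentationOf {W U : Type} {H : SimpleGraph W} (DH : PlaneDrawing H)
    {K : SimpleGraph U} (DK : PlaneDrawing K) (ψ : W → U) : Prop where
  inj : Function.Injective ψ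
  adj_iff : ∀ a b, K.Adj (ψ a) (ψ b) ↔ H.Adj a b
  vpos_eq : ∀ a, DK.vpos (ψ a) = DH.vpos a
  arc_eq : ∀ a b, H.Adj a b → ∀ t ∈ Set.Icc (0:ℝ) 1, DK.arc (ψ a) (ψ b) t = DH.arc a b t
  oneplane : DK.OnePlane
  kite : DK.KiteAugmented
  new_path : ∀ u v w x, DH.Crosses u v w x →
    ∃ κ : K.Walk (ψ u) (ψ w), κ.IsPath ∧ κ.length = H.dist u w ∧
      ∀ y ∈ κ.support, y ≠ ψ u → y ≠ ψ w → y ∉ Set.range ψ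
  new_deg : ∀ z : U, z ∉ Set.range ψ → (K.neighborSet z).ncard = 2
  cross_of : ∀ a b c e, DK.Crosses a b c e →
    ∃ u v w x, DH.Crosses u v w x ∧ s(a, b) = s(ψ u, ψ v) ∧ s(c, e) = s(ψ w, ψ x)

end CopsRobbers

namespace CR18
open CopsRobbers

lemma withinDist_eq {V : Type} {G : SimpleGraph V} {u v : V} (h : WithinDist G 0 u v) :
    u = v := by
  obtain ⟨w, hw⟩ := h
  exact SimpleGraph.Walk.eq_of_length_eq_zero (Nat.le_zero.mp hw)

lemma withinDist_refl {V : Type} (G : SimpleGraph V) (u : V) : WithinDist G 0 u u :=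
  ⟨SimpleGraph.Walk.nil, by simp⟩

lemma copsWin_card {V : Type} [Fintype V] (G : SimpleGraph V) :
    CopsWin G 0 (Fintype.card V) := by
  refine ⟨fun _ i => (Fintype.equivFin V).symm i, fun _ _ _ => Or.inl rfl, fun r _ => ?_⟩
  refine ⟨0, Fintype.equivFin V (r 0), Or.inl ?_⟩
  show WithinDist G 0 ((Fintype.equivFin V).symm (Fintype.equivFin V (r 0))) (r 0)
  rw [Equiv.symm_apply_apply]
  exact withinDist_refl G (r 0)

lemma ofFn_succ_concat {α : Type*} (f : ℕ → α) (n : ℕ) :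
    (List.ofFn fun m : Fin (n + 1) => f m.val) =
      (List.ofFn fun m : Fin n => f m.val) ++ [f n] := by
  rw [List.ofFn_succ']
  simp [List.concat_eq_append]

variable {A B : Type}

def expand (mid : A → A → A ⊕ B) : List A → List (A ⊕ B)
  | [] => []
  | [x] => [Sum.inl x]
  | x :: y :: t => Sum.inl x :: mid x y :: expand mid (y :: t)

lemma expand_concat2 (mid : A → A → A ⊕ B) :
    ∀ (l : List A) (y x : A),
      expand mid (l ++ [y, x]) = expand mid (l ++ [y]) ++ [mid y x, Sum.inl x]
  | [], y, x => rfl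
  | [a], y, x => rfl
  | a :: b :: t, y, x => by
    have ih := expand_concat2 mid (b :: t) y x
    simp only [List.cons_append, List.append_eq, expand] at ih ⊢
    rw [ih]

section Shadow

variable {p : ℕ} (H : SimpleGraph (A ⊕ B))

def caught (FH : List (A ⊕ B) → Fin p → A ⊕ B) (i : Fin p) (h : List (A ⊕ B)) : Prop :=
  ∃ l₀ x l₁, h = l₀ ++ x :: l₁ ∧ (FH l₀ i = x ∨ FH (l₀ ++ [x]) i = x)

lemma caught_concat {FH : List (A ⊕ B) → Fin p → A ⊕ B} {i : Fin p}
    {h : List (A ⊕ B)} (y : A ⊕ B) (hc : caught FH i h) : caught FH i (h ++ [y]) := by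
  obtain ⟨l₀, x, l₁, rfl, hor⟩ := hc
  exact ⟨l₀, x, l₁ ++ [y], by simp, hor⟩

lemma not_caught_nil {FH : List (A ⊕ B) → Fin p → A ⊕ B} {i : Fin p} :
    ¬ caught FH i [] := by
  rintro ⟨l₀, x, l₁, h, -⟩
  simp at h

open Classical in
noncomputable def shadow (FH : List (A ⊕ B) → Fin p → A ⊕ B) (i : Fin p)
    (h : List (A ⊕ B)) : A ⊕ B :=
  h.reverseRecOn (FH [] i) fun l x prev =>
    if caught FH i (l ++ [x]) then (if Step H prev x then x else prev)
    else FH (l ++ [x]) i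

lemma shadow_nil (FH : List (A ⊕ B) → Fin p → A ⊕ B) (i : Fin p) :
    shadow H FH i [] = FH [] i := by
  unfold shadow; rw [List.reverseRecOn_nil]

open Classical in
lemma shadow_concat (FH : List (A ⊕ B) → Fin p → A ⊕ B) (i : Fin p)
    (l : List (A ⊕ B)) (x : A ⊕ B) :
    shadow H FH i (l ++ [x]) =
      if caught FH i (l ++ [x]) then
        (if Step H (shadow H FH i l) x then x else shadow H FH i l)
      else FH (l ++ [x]) i := by
  unfold shadow
  rw [List.reverseRecOn_concat]

lemma shadow_not_caught {FH : List (A ⊕ B) → Fin p → A ⊕ B} {i : Fin p}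
    {l : List (A ⊕ B)} (h : ¬ caught FH i l) : shadow H FH i l = FH l i := by
  induction l using List.reverseRecOn with
  | nil => exact shadow_nil H FH i
  | append_singleton l x _ => rw [shadow_concat, if_neg h]

lemma shadow_step {FH : List (A ⊕ B) → Fin p → A ⊕ B}
    (hF1 : ∀ hist x i, Step H (FH hist i) (FH (hist ++ [x]) i))
    (i : Fin p) (l : List (A ⊕ B)) (x : A ⊕ B) :
    Step H (shadow H FH i l) (shadow H FH i (l ++ [x])) := by
  rw [shadow_concat]
  split_ifs with h1 h2
  · exact h2
  · exact Or.inl rfl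
  · rw [shadow_not_caught H (fun hc => h1 (caught_concat x hc))]
    exact hF1 l x i

lemma concat_decomp {α : Type*} {L : List α} {z : α} {l₀ : List α} {x : α}
    {l₁ : List α} (h : L ++ [z] = l₀ ++ x :: l₁) :
    (l₀ = L ∧ x = z ∧ l₁ = []) ∨ ∃ l₁', l₁ = l₁' ++ [z] ∧ L = l₀ ++ x :: l₁' := by
  rcases List.eq_nil_or_concat l₁ with rfl | ⟨l₁', y, rfl⟩
  · left
    have hd := congrArg List.dropLast h
    simp only [List.dropLast_concat] at hd
    refine ⟨hd.symm, ?_, rfl⟩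
    rw [hd] at h
    have := List.append_cancel_left h
    simpa using this.symm
  · right
    have h2 : L ++ [z] = (l₀ ++ x :: l₁') ++ [y] := by rw [h]; simp
    have hd := congrArg List.dropLast h2
    simp only [List.dropLast_concat] at hd
    have hy : z = y := by
      rw [hd] at h2
      have := List.append_cancel_left h2
      simpa using this
    exact ⟨l₁', by simp [hy, List.concat_eq_append], hd⟩

lemma shadow_ofFn {FH : List (A ⊕ B) → Fin p → A ⊕ B}
    (hF1 : ∀ hist x i, Step H (FH hist i) (FH (hist ++ [x]) i))
    (i : Fin p) (r' : ℕ → A ⊕ B) (hr' : ∀ n, Step H (r' n) (r' (n + 1))) :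
    ∀ n, caught FH i (List.ofFn fun m : Fin (n + 1) => r' m.val) →
      shadow H FH i (List.ofFn fun m : Fin (n + 1) => r' m.val) = r' n := by
  intro n
  induction n with
  | zero =>
    intro hc
    rw [ofFn_succ_concat r' 0] at hc ⊢
    have hnil : (List.ofFn fun m : Fin 0 => r' m.val) = ([] : List (A ⊕ B)) := by simp
    have hstep : Step H (shadow H FH i (List.ofFn fun m : Fin 0 => r' m.val)) (r' 0) := by
      rw [hnil, shadow_nil]
      obtain ⟨l₀, x, l₁, heq, hor⟩ := hc
      obtain ⟨rfl, rfl, -⟩ | ⟨l₁', -, hL⟩ := concat_decomp heq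
      · rw [hnil] at hor
        rcases hor with h | h
        · exact Or.inl h
        · have hstep' := hF1 [] (r' 0) i
          rw [h] at hstep'
          exact hstep'
      · exfalso
        have := congrArg List.length hL
        simp at this
    rw [shadow_concat, if_pos hc, if_pos hstep]
  | succ n ih =>
    intro hc
    rw [ofFn_succ_concat r' (n + 1)] at hc ⊢
    by_cases hcn : caught FH i (List.ofFn fun m : Fin (n + 1) => r' m.val)
    · have hstep : Step H (shadow H FH i (List.ofFn fun m : Fin (n + 1) => r' m.val))
          (r' (n + 1)) := by
        rw [ih hcn]; exact hr' n
      rw [shadow_concat, if_pos hc, if_pos hstep]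
    · have hstep : Step H (shadow H FH i (List.ofFn fun m : Fin (n + 1) => r' m.val))
          (r' (n + 1)) := by
        rw [shadow_not_caught H hcn]
        obtain ⟨l₀, x, l₁, heq, hor⟩ := hc
        obtain ⟨rfl, rfl, -⟩ | ⟨l₁', -, hL⟩ := concat_decomp heq
        · rcases hor with h | h
          · exact Or.inl h
          · have hstep' := hF1 (List.ofFn fun m : Fin (n + 1) => r' m.val) (r' (n + 1)) i
            rw [h] at hstep'
            exact hstep'
        · exact absurd ⟨l₀, x, l₁', hL, hor⟩ hcn
      rw [shadow_concat, if_pos hc, if_pos hstep]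

end Shadow

section Proj

variable {p : ℕ} (H : SimpleGraph (A ⊕ B))

noncomputable def proj (π0 : B → A) (C : List (A ⊕ B) → Fin p → A ⊕ B)
    (i : Fin p) (l : List (A ⊕ B)) : A :=
  List.foldl (fun prev c => match c with | Sum.inl a => a | Sum.inr _ => prev)
    (match C [] i with | Sum.inl a => a | Sum.inr b => π0 b)
    ((List.range l.length).map fun k => C (l.take (k + 1)) i)

lemma proj_nil (π0 : B → A) (C : List (A ⊕ B) → Fin p → A ⊕ B) (i : Fin p) :
    proj π0 C i [] = match C [] i with | Sum.inl a => a | Sum.inr b => π0 b := rfl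

lemma proj_concat (π0 : B → A) (C : List (A ⊕ B) → Fin p → A ⊕ B) (i : Fin p)
    (l : List (A ⊕ B)) (x : A ⊕ B) :
    proj π0 C i (l ++ [x]) =
      match C (l ++ [x]) i with
      | Sum.inl a => a
      | Sum.inr _ => proj π0 C i l := by
  have h1 : (List.range (l ++ [x]).length).map (fun k => C ((l ++ [x]).take (k + 1)) i) =
      ((List.range l.length).map fun k => C (l.take (k + 1)) i) ++ [C (l ++ [x]) i] := by
    rw [show (l ++ [x]).length = l.length + 1 by simp, List.range_succ, List.map_append]
    congr 1
    · exact List.map_congr_left fun k hk => by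
        rw [List.take_append_of_le_length (by simpa using List.mem_range.mp hk)]
    · simp [List.take_of_length_le]
  unfold proj
  rw [h1, List.foldl_concat]

variable (hbipA : ∀ a a' : A, ¬H.Adj (Sum.inl a) (Sum.inl a'))
variable (hbipB : ∀ b b' : B, ¬H.Adj (Sum.inr b) (Sum.inr b'))
variable (G : SimpleGraph A)
variable (hG : ∀ u v : A, G.Adj u v ↔
      u ≠ v ∧ ∃ b : B, H.Adj (Sum.inl u) (Sum.inr b) ∧ H.Adj (Sum.inl v) (Sum.inr b))
variable (π0 : B → A) (hπ0 : ∀ b, H.Adj (Sum.inr b) (Sum.inl (π0 b)))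
variable (C : List (A ⊕ B) → Fin p → A ⊕ B)
variable (hC : ∀ l x i, Step H (C l i) (C (l ++ [x]) i))

include hπ0 hC hbipB in
lemma proj_inv (i : Fin p) :
    ∀ l, (C l i = Sum.inl (proj π0 C i l)) ∨
      ∃ b, C l i = Sum.inr b ∧ H.Adj (Sum.inl (proj π0 C i l)) (Sum.inr b) := by
  intro l
  induction l using List.reverseRecOn with
  | nil =>
    rw [proj_nil]
    rcases hEq : C [] i with a | b
    · exact Or.inl rfl
    · exact Or.inr ⟨b, rfl, (hπ0 b).symm⟩
  | append_singleton l x ih =>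
    rw [proj_concat]
    rcases hEq : C (l ++ [x]) i with a | b
    · exact Or.inl rfl
    · refine Or.inr ⟨b, rfl, ?_⟩
      have hs := hC l x i
      rw [hEq] at hs
      rcases ih with h1 | ⟨b', hb', hadj⟩
      · rcases hs with he | ha
        · rw [h1] at he; exact absurd he (by simp)
        · rw [h1] at ha; exact ha
      · rcases hs with he | ha
        · rw [hb'] at he
          injection he with hbe
          rw [hbe] at hadj
          exact hadj
        · rw [hb'] at ha
          exact absurd ha (hbipB b' b)

include hπ0 hC hbipA hbipB hG in
lemma proj_step1 (i : Fin p) (l : List (A ⊕ B)) (x : A ⊕ B) :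
    Step G (proj π0 C i l) (proj π0 C i (l ++ [x])) := by
  rw [proj_concat]
  rcases hEq : C (l ++ [x]) i with a | b
  · have hs := hC l x i
    rw [hEq] at hs
    rcases proj_inv H hbipB π0 hπ0 C hC i l with h1 | ⟨b', hb', hadj⟩
    · rcases hs with he | ha
      · rw [h1] at he
        injection he with h
        exact Or.inl h
      · rw [h1] at ha
        exact absurd ha (hbipA _ _)
    · rcases hs with he | ha
      · rw [hb'] at he; exact absurd he (by simp)
      · rw [hb'] at ha
        by_cases hpa : proj π0 C i l = a
        · exact Or.inl hpa
        · exact Or.inr ((hG _ _).mpr ⟨hpa, b', hadj, ha.symm⟩)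
  · exact Or.inl rfl

include hπ0 hC hbipA hbipB hG in
lemma proj_step2 (i : Fin p) (l : List (A ⊕ B)) (m x : A ⊕ B) :
    Step G (proj π0 C i l) (proj π0 C i (l ++ [m, x])) := by
  have h2 : l ++ [m, x] = (l ++ [m]) ++ [x] := by simp
  rw [h2]
  rcases hEq : C (l ++ [m]) i with a | b
  · rcases hEq2 : C ((l ++ [m]) ++ [x]) i with a' | b'
    · have hs := hC (l ++ [m]) x i
      rw [hEq, hEq2] at hs
      have haa : a = a' := by
        rcases hs with he | ha
        · injection he
        · exact absurd ha (hbipA _ _)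
      have e1 : proj π0 C i ((l ++ [m]) ++ [x]) = proj π0 C i (l ++ [m]) := by
        rw [proj_concat, hEq2, proj_concat, hEq, haa]
      rw [e1]
      exact proj_step1 H hbipA hbipB G hG π0 hπ0 C hC i l m
    · have e1 : proj π0 C i ((l ++ [m]) ++ [x]) = proj π0 C i (l ++ [m]) := by
        rw [proj_concat, hEq2]
      rw [e1]
      exact proj_step1 H hbipA hbipB G hG π0 hπ0 C hC i l m
  · have e1 : proj π0 C i (l ++ [m]) = proj π0 C i l := by
      rw [proj_concat, hEq]
    have := proj_step1 H hbipA hbipB G hG π0 hπ0 C hC i (l ++ [m]) x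
    rw [e1] at this
    exact this

end Proj

end CR18

namespace CR18
open CopsRobbers

lemma copsWin_of {A B : Type} (H : SimpleGraph (A ⊕ B))
    (hbipA : ∀ a a' : A, ¬H.Adj (Sum.inl a) (Sum.inl a'))
    (hbipB : ∀ b b' : B, ¬H.Adj (Sum.inr b) (Sum.inr b'))
    (hcov : ∀ b : B, ∃ a : A, H.Adj (Sum.inr b) (Sum.inl a))
    (G : SimpleGraph A)
    (hG : ∀ u v : A, G.Adj u v ↔
      u ≠ v ∧ ∃ b : B, H.Adj (Sum.inl u) (Sum.inr b) ∧ H.Adj (Sum.inl v) (Sum.inr b))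
    {p : ℕ} (hp : CopsWin H 0 p) : CopsWin G 0 p := by
  classical
  obtain ⟨FH, hF1, hF2⟩ := hp
  obtain ⟨π0, hπ0⟩ : ∃ π0 : B → A, ∀ b, H.Adj (Sum.inr b) (Sum.inl (π0 b)) :=
    ⟨fun b => (hcov b).choose, fun b => (hcov b).choose_spec⟩
  obtain ⟨mid, hmid1, hmid2⟩ : ∃ mid : A → A → A ⊕ B,
      (∀ u v, Step H (Sum.inl u) (mid u v)) ∧
      (∀ u v, Step G u v → Step H (mid u v) (Sum.inl v)) := by
    refine ⟨fun u v => if h : G.Adj u v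
        then Sum.inr (((hG u v).mp h).2.choose) else Sum.inl u, ?_, ?_⟩
    · intro u v
      dsimp only
      by_cases h : G.Adj u v
      · rw [dif_pos h]
        exact Or.inr (((hG u v).mp h).2.choose_spec).1
      · rw [dif_neg h]
        exact Or.inl rfl
    · intro u v huv
      dsimp only
      by_cases h : G.Adj u v
      · rw [dif_pos h]
        exact Or.inr ((((hG u v).mp h).2.choose_spec).2).symm
      · rw [dif_neg h]
        rcases huv with he | ha
        · exact Or.inl (congrArg Sum.inl he)
        · exact absurd ha h
  set C : List (A ⊕ B) → Fin p → A ⊕ B := fun l i => shadow H FH i l with hCdef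
  have hC : ∀ l x i, Step H (C l i) (C (l ++ [x]) i) :=
    fun l x i => shadow_step H hF1 i l x
  refine ⟨fun hist i => proj π0 C i (expand mid hist), ?_, ?_⟩
  · intro hist x i
    rcases List.eq_nil_or_concat hist with rfl | ⟨l, y, rfl⟩
    · show Step G (proj π0 C i []) (proj π0 C i ([] ++ [Sum.inl x]))
      exact proj_step1 H hbipA hbipB G hG π0 hπ0 C hC i [] (Sum.inl x)
    · show Step G (proj π0 C i (expand mid (l.concat y)))
        (proj π0 C i (expand mid (l.concat y ++ [x])))
      have e3 : l.concat y ++ [x] = l ++ [y, x] := by simp [List.concat_eq_append]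
      have e4 : l.concat y = l ++ [y] := List.concat_eq_append
      rw [e3, e4, expand_concat2]
      exact proj_step2 H hbipA hbipB G hG π0 hπ0 C hC i (expand mid (l ++ [y]))
        (mid y x) (Sum.inl x) |>.imp id id
  · intro r hr
    obtain ⟨r', hr0, hr1⟩ : ∃ r' : ℕ → A ⊕ B,
        (∀ t, r' (2 * t) = Sum.inl (r t)) ∧
        (∀ t, r' (2 * t + 1) = mid (r t) (r (t + 1))) := by
      refine ⟨fun n => if n % 2 = 0 then Sum.inl (r (n / 2))
        else mid (r (n / 2)) (r (n / 2 + 1)), ?_, ?_⟩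
      · intro t
        have h1 : 2 * t % 2 = 0 := by omega
        have h2 : 2 * t / 2 = t := by omega
        dsimp only
        rw [if_pos h1, h2]
      · intro t
        have h1 : ¬((2 * t + 1) % 2 = 0) := by omega
        have h2 : (2 * t + 1) / 2 = t := by omega
        dsimp only
        rw [if_neg h1, h2]
    have hr'step : ∀ n, Step H (r' n) (r' (n + 1)) := by
      intro n
      rcases Nat.even_or_odd n with ⟨t, ht⟩ | ⟨t, ht⟩
      · have ht' : n = 2 * t := by omega
        subst ht'
        rw [hr0 t, hr1 t]
        exact hmid1 _ _
      · subst ht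
        have h2 : 2 * t + 1 + 1 = 2 * (t + 1) := by ring
        rw [h2, hr1 t, hr0 (t + 1)]
        exact hmid2 _ _ (hr t)
    obtain ⟨nH, i, hcap⟩ := hF2 r' hr'step
    have hcap' : FH (List.ofFn fun m : Fin nH => r' m.val) i = r' nH ∨
        FH (List.ofFn fun m : Fin (nH + 1) => r' m.val) i = r' nH := by
      rcases hcap with h | h
      · exact Or.inl (withinDist_eq h)
      · exact Or.inr (withinDist_eq h)
    have hq : caught FH i (List.ofFn fun m : Fin (nH + 1) => r' m.val) := by
      refine ⟨List.ofFn fun m : Fin nH => r' m.val, r' nH, [], ?_, ?_⟩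
      · rw [ofFn_succ_concat]
      · rcases hcap' with h | h
        · exact Or.inl h
        · refine Or.inr ?_
          rw [← ofFn_succ_concat]
          exact h
    set t := nH + 1 with htdef
    have hmono : ∀ m, nH + 1 ≤ m → caught FH i (List.ofFn fun k : Fin m => r' k.val) := by
      intro m hm
      induction m, hm using Nat.le_induction with
      | base => exact hq
      | succ m hm ih =>
        have h3 := caught_concat (r' m) ih
        rw [← ofFn_succ_concat r' m] at h3
        exact h3
    have hct : caught FH i (List.ofFn fun k : Fin (2 * t + 1) => r' k.val) :=
      hmono (2 * t + 1) (by omega)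
    have hsh : shadow H FH i (List.ofFn fun k : Fin (2 * t + 1) => r' k.val)
        = r' (2 * t) := shadow_ofFn H hF1 i r' hr'step (2 * t) hct
    have hexp : ∀ s : ℕ, expand mid (List.ofFn fun m : Fin (s + 1) => r m.val) =
        List.ofFn fun k : Fin (2 * s + 1) => r' k.val := by
      intro s
      induction s with
      | zero =>
        have h0 : (List.ofFn fun m : Fin 1 => r m.val) = [r 0] := by
          simp [List.ofFn_succ]
        have h1 : (List.ofFn fun k : Fin (2 * 0 + 1) => r' k.val) = [r' 0] := by
          simp [List.ofFn_succ]
        rw [h0, h1, show r' 0 = Sum.inl (r 0) from hr0 0]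
        rfl
      | succ s ih =>
        have e1' : (List.ofFn fun m : Fin (s + 2) => r m.val) =
            (List.ofFn fun m : Fin s => r m.val) ++ [r s, r (s + 1)] := by
          rw [ofFn_succ_concat r (s + 1), ofFn_succ_concat r s]
          simp
        have e2 : (List.ofFn fun m : Fin s => r m.val) ++ [r s] =
            List.ofFn fun m : Fin (s + 1) => r m.val := (ofFn_succ_concat r s).symm
        rw [e1', expand_concat2, e2, ih]
        have h23 : 2 * (s + 1) + 1 = 2 * s + 1 + 1 + 1 := by ring
        rw [h23, ofFn_succ_concat r' (2 * s + 1 + 1), ofFn_succ_concat r' (2 * s + 1)]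
        have e4 : r' (2 * s + 1) = mid (r s) (r (s + 1)) := hr1 s
        have e5 : r' (2 * s + 1 + 1) = Sum.inl (r (s + 1)) := by
          have h6 : 2 * s + 1 + 1 = 2 * (s + 1) := by ring
          rw [h6, hr0]
        rw [e4, e5]
        simp
    refine ⟨t, i, Or.inr ?_⟩
    show WithinDist G 0
      (proj π0 C i (expand mid (List.ofFn fun m : Fin (t + 1) => r m.val))) (r t)
    rw [hexp t, ofFn_succ_concat r' (2 * t), proj_concat]
    have e7 : C ((List.ofFn fun k : Fin (2 * t) => r' k.val) ++ [r' (2 * t)]) i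
        = Sum.inl (r t) := by
      rw [← ofFn_succ_concat r' (2 * t)]
      show shadow H FH i _ = _
      rw [hsh, hr0 t]
    rw [e7]
    exact withinDist_refl G (r t)

end CR18


open CopsRobbers in
/-- Let `H` be a finite simple bipartite graph with parts `A` (= `V`) and `B` (= `F`) in
which every vertex of `B` has a neighbour in `A`, and let `G` be the graph on `A` in
which two distinct vertices are adjacent iff they have a common neighbour in `B`
(i.e. `G = H²[V]`).  Then `c(G) ≤ c(H)`. -/
theorem statement18 {A B : Type} [Fintype A] [Fintype B]
    (H : SimpleGraph (A ⊕ B))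
    (hbipA : ∀ a a' : A, ¬H.Adj (Sum.inl a) (Sum.inl a'))
    (hbipB : ∀ b b' : B, ¬H.Adj (Sum.inr b) (Sum.inr b'))
    (hcov : ∀ b : B, ∃ a : A, H.Adj (Sum.inr b) (Sum.inl a))
    (G : SimpleGraph A)
    (hG : ∀ u v : A, G.Adj u v ↔
      u ≠ v ∧ ∃ b : B, H.Adj (Sum.inl u) (Sum.inr b) ∧ H.Adj (Sum.inl v) (Sum.inr b)) :
    copNumber G 0 ≤ copNumber H 0 := by
  have hne : {q | CopsWin H 0 q}.Nonempty := ⟨Fintype.card (A ⊕ B), CR18.copsWin_card H⟩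
  have hmem : CopsWin H 0 (copNumber H 0) := Nat.sInf_mem hne
  exact Nat.sInf_le (CR18.copsWin_of H hbipA hbipB hcov G hG hmem)
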